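/- (Addition theorem for Hermite polynomials) For every integer n ≥ 0, every integer r ≥ 1, all real numbers a_1,…,a_r not all zero, and all real X_1,…,X_r: ((Σ_{k=1}^r a_k²)^{n/2}/n!) · H_n((Σ_{k=1}^r a_k X_k)/√(Σ_{k=1}^r a_k²)) = Σ_{m_1+⋯+m_r=n} Π_{k=1}^r (a_k^{m_k}/m_k!) H_{m_k}(X_k), where the sum runs over all r-tuples of nonnegative integers (m_1,…,m_r) summing to n. -/

import Mathlib

open Finset

/-- The (physicists') Hermite polynomial `H_n(X)`. -/
noncomputable def Hpoly (n : ℕ) (X : ℝ) : ℝ :=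
  (n.factorial : ℝ) *
    ∑ k ∈ Finset.range (n / 2 + 1),
      (-1) ^ k / ((k.factorial : ℝ) * ((n - 2 * k).factorial : ℝ)) * (2 * X) ^ (n - 2 * k)

open PowerSeries in

noncomputable def Aser (z : ℝ) : PowerSeries ℝ := PowerSeries.mk fun p => (2*z)^p / p.factorial

noncomputable def Bser (s : ℝ) : PowerSeries ℝ :=
  PowerSeries.mk fun k => if Even k then (-s)^(k/2) / (k/2).factorial else 0

lemma conv (x y : ℝ) (m : ℕ) :
    ∑ j ∈ range (m+1), x^j/(j.factorial:ℝ) * (y^(m-j)/((m-j).factorial:ℝ))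
      = (x+y)^m / (m.factorial:ℝ) := by
  rw [add_pow, Finset.sum_div]
  refine Finset.sum_congr rfl fun j hj => ?_
  have hjm : j ≤ m := Nat.lt_succ_iff.mp (Finset.mem_range.mp hj)
  have h := Nat.choose_mul_factorial_mul_factorial hjm
  have hc : ((m.choose j : ℝ) * j.factorial * (m-j).factorial) = m.factorial := by
    exact_mod_cast congrArg (Nat.cast (R := ℝ)) h
  have h1 : (j.factorial : ℝ) ≠ 0 := Nat.cast_ne_zero.mpr j.factorial_ne_zero
  have h2 : ((m-j).factorial : ℝ) ≠ 0 := Nat.cast_ne_zero.mpr (m-j).factorial_ne_zero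
  have h3 : (m.factorial : ℝ) ≠ 0 := Nat.cast_ne_zero.mpr m.factorial_ne_zero
  field_simp
  linear_combination (-(x^j * y^(m-j))) * hc

lemma Aser_mul (z w : ℝ) : Aser z * Aser w = Aser (z+w) := by
  ext n
  rw [PowerSeries.coeff_mul, Finset.Nat.sum_antidiagonal_eq_sum_range_succ_mk]
  simp only [Aser, PowerSeries.coeff_mk]
  rw [conv (2*z) (2*w) n]
  ring_nf

lemma helper_even_sum (f : ℕ → ℝ) (n : ℕ) :
    ∑ i ∈ range (n+1), (if Even i then f (i/2) else 0) = ∑ a ∈ range (n/2+1), f a := by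
  rw [← Finset.sum_filter]
  refine Finset.sum_nbij' (fun i => i/2) (fun a => 2*a) ?_ ?_ ?_ ?_ ?_
  · intro i hi
    simp only [Finset.mem_filter, Finset.mem_range] at hi ⊢
    omega
  · intro a ha
    simp only [Finset.mem_filter, Finset.mem_range] at ha ⊢
    constructor
    · omega
    · exact even_two_mul a
  · intro i hi
    simp only [Finset.mem_filter, Finset.mem_range, Nat.even_iff] at hi
    omega
  · intro a ha; omega
  · intro i hi; rfl

lemma Bser_mul (s u : ℝ) : Bser s * Bser u = Bser (s+u) := by
  ext n
  rw [PowerSeries.coeff_mul, Finset.Nat.sum_antidiagonal_eq_sum_range_succ_mk]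
  simp only [Bser, PowerSeries.coeff_mk]
  have step : ∀ i ∈ range (n+1),
      (if Even i then (-s)^(i/2)/((i/2).factorial:ℝ) else 0) *
        (if Even (n-i) then (-u)^((n-i)/2)/(((n-i)/2).factorial:ℝ) else 0)
      = if Even i then
          ((-s)^(i/2)/((i/2).factorial:ℝ)) *
            (if Even (n-(2*(i/2))) then (-u)^((n-2*(i/2))/2)/(((n-2*(i/2))/2).factorial:ℝ) else 0)
        else 0 := by
    intro i hi
    by_cases h : Even i
    · have h2 : 2*(i/2) = i := by rw [Nat.even_iff] at h; omega
      simp [h, h2]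
    · simp [h]
  rw [Finset.sum_congr rfl step,
    helper_even_sum (fun a => ((-s)^a/((a).factorial:ℝ)) *
      (if Even (n-(2*a)) then (-u)^((n-2*a)/2)/(((n-2*a)/2).factorial:ℝ) else 0)) n]
  by_cases hn : Even n
  · obtain ⟨m, hm⟩ := hn
    have hn2 : n = 2*m := by omega
    subst hn2
    have hdiv : 2*m/2 = m := by omega
    rw [hdiv]
    have step2 : ∀ a ∈ range (m+1),
        ((-s)^a/((a).factorial:ℝ)) *
          (if Even (2*m-(2*a)) then (-u)^((2*m-2*a)/2)/(((2*m-2*a)/2).factorial:ℝ) else 0)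
        = (-s)^a/((a).factorial:ℝ) * ((-u)^(m-a)/((m-a).factorial:ℝ)) := by
      intro a ha
      have haa : a ≤ m := Nat.lt_succ_iff.mp (Finset.mem_range.mp ha)
      have he : Even (2*m - 2*a) := ⟨m-a, by omega⟩
      have hd : (2*m-2*a)/2 = m - a := by omega
      rw [if_pos he, hd]
    rw [Finset.sum_congr rfl step2, conv (-s) (-u) m, if_pos ⟨m, by omega⟩]
    ring_nf
  · rw [if_neg hn]
    apply Finset.sum_eq_zero
    intro a ha
    have haa : a ≤ n/2 := Nat.lt_succ_iff.mp (Finset.mem_range.mp ha)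
    have : ¬ Even (n - 2*a) := by
      rw [Nat.even_iff] at hn ⊢
      omega
    rw [if_neg this, mul_zero]

noncomputable def Eser (z s : ℝ) : PowerSeries ℝ := Aser z * Bser s

lemma Eser_mul (z w s u : ℝ) : Eser z s * Eser w u = Eser (z+w) (s+u) := by
  unfold Eser
  rw [show Aser z * Bser s * (Aser w * Bser u) = (Aser z * Aser w) * (Bser s * Bser u) by ring,
    Aser_mul, Bser_mul]

lemma Aser_zero : Aser 0 = 1 := by
  ext n
  simp only [Aser, PowerSeries.coeff_mk, PowerSeries.coeff_one, mul_zero, zero_pow_eq]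
  rcases eq_or_ne n 0 with rfl | h
  · simp
  · simp [h]

lemma Bser_zero : Bser 0 = 1 := by
  ext n
  simp only [Bser, PowerSeries.coeff_mk, PowerSeries.coeff_one, neg_zero, zero_pow_eq]
  rcases eq_or_ne n 0 with rfl | h
  · simp
  · rw [if_neg h]
    by_cases he : Even n
    · rw [if_pos he]
      have h2 : n/2 ≠ 0 := by rw [Nat.even_iff] at he; omega
      simp [h2]
    · rw [if_neg he]

lemma Eser_zero : Eser 0 0 = 1 := by
  rw [Eser, Aser_zero, Bser_zero, one_mul]

lemma coeff_Eser (n : ℕ) (z s : ℝ) :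
    PowerSeries.coeff n (Eser z s)
      = ∑ k ∈ range (n/2+1), (-s)^k/(k.factorial:ℝ) * ((2*z)^(n-2*k)/((n-2*k).factorial:ℝ)) := by
  rw [Eser, mul_comm, PowerSeries.coeff_mul, Finset.Nat.sum_antidiagonal_eq_sum_range_succ_mk]
  simp only [Aser, Bser, PowerSeries.coeff_mk]
  have step : ∀ i ∈ range (n+1),
      (if Even i then (-s)^(i/2)/((i/2).factorial:ℝ) else 0) * ((2*z)^(n-i)/((n-i).factorial:ℝ))
      = if Even i then
          (-s)^(i/2)/((i/2).factorial:ℝ) * ((2*z)^(n-2*(i/2))/((n-2*(i/2)).factorial:ℝ))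
        else 0 := by
    intro i hi
    by_cases h : Even i
    · have h2 : 2*(i/2) = i := by rw [Nat.even_iff] at h; omega
      simp [h, h2]
    · simp [h]
  rw [Finset.sum_congr rfl step,
    helper_even_sum (fun a => (-s)^a/((a).factorial:ℝ) * ((2*z)^(n-2*a)/((n-2*a).factorial:ℝ))) n]

lemma Eser_prod {ι : Type*} (t : Finset ι) (z s : ι → ℝ) :
    ∏ k ∈ t, Eser (z k) (s k) = Eser (∑ k ∈ t, z k) (∑ k ∈ t, s k) := by
  classical
  induction t using Finset.cons_induction with
  | empty => simp [Eser_zero]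
  | cons i t hi ih => rw [Finset.prod_cons, ih, Eser_mul, Finset.sum_cons, Finset.sum_cons]

lemma coeff_prod_tuple (r n : ℕ) (f : Fin r → PowerSeries ℝ) :
    PowerSeries.coeff n (∏ k, f k)
      = ∑ m ∈ Finset.Nat.antidiagonalTuple r n, ∏ k, PowerSeries.coeff (m k) (f k) := by
  rw [PowerSeries.coeff_prod]
  refine Finset.sum_nbij' (fun l => ⇑l) (fun m => Finsupp.equivFunOnFinite.symm m) ?_ ?_ ?_ ?_ ?_
  · intro l hl
    rw [Finset.mem_finsuppAntidiag] at hl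
    rw [Finset.Nat.mem_antidiagonalTuple]
    exact hl.1
  · intro m hm
    rw [Finset.Nat.mem_antidiagonalTuple] at hm
    rw [Finset.mem_finsuppAntidiag]
    refine ⟨?_, Finset.subset_univ _⟩
    simpa using hm
  · intro l hl
    exact Finsupp.equivFunOnFinite.symm_apply_apply l
  · intro m hm
    rfl
  · intro l hl
    rfl


lemma evalR (m : ℕ) (a x : ℝ) :
    PowerSeries.coeff m (Eser (a*x) (a^2)) = a^m / (m.factorial:ℝ) * Hpoly m x := by
  rw [coeff_Eser, Hpoly, ← mul_assoc (a ^ m / (m.factorial:ℝ)),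
    div_mul_cancel₀ _ (Nat.cast_ne_zero (R := ℝ) |>.mpr m.factorial_ne_zero), Finset.mul_sum]
  refine Finset.sum_congr rfl fun k hk => ?_
  have h2k : 2*k ≤ m := by
    have := Finset.mem_range.mp hk
    omega
  have ha : a^(m-2*k) * a^(2*k) = a^m := by
    rw [← pow_add]
    congr 1
    omega
  rw [← ha]
  ring

lemma evalL (n : ℕ) (z s : ℝ) (hs : 0 < s) :
    s ^ ((n:ℝ)/2) / (n.factorial:ℝ) * Hpoly n (z / Real.sqrt s)
      = PowerSeries.coeff n (Eser z s) := by
  set c := Real.sqrt s with hcdef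
  have hc : 0 < c := Real.sqrt_pos.mpr hs
  have hc2 : c^2 = s := Real.sq_sqrt hs.le
  have hpow : s ^ ((n:ℝ)/2) = c^n := by
    rw [← hc2, ← Real.rpow_natCast c 2, ← Real.rpow_mul hc.le,
      show ((2:ℕ):ℝ)*((n:ℝ)/2) = (n:ℝ) by push_cast; ring, Real.rpow_natCast]
  rw [coeff_Eser, hpow, Hpoly, ← mul_assoc,
    div_mul_cancel₀ _ (Nat.cast_ne_zero (R := ℝ) |>.mpr n.factorial_ne_zero), Finset.mul_sum]
  refine Finset.sum_congr rfl fun k hk => ?_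
  have h2k : 2*k ≤ n := by
    have := Finset.mem_range.mp hk
    omega
  have hc3 : c^(n-2*k) * (c^2)^k = c^n := by
    rw [← pow_mul, ← pow_add]
    congr 1
    omega
  rw [← hc2, ← hc3]
  have h1 : ((k.factorial:ℝ)) ≠ 0 := Nat.cast_ne_zero.mpr k.factorial_ne_zero
  have h2 : (((n-2*k).factorial:ℝ)) ≠ 0 := Nat.cast_ne_zero.mpr (n-2*k).factorial_ne_zero
  have hc0 : c ≠ 0 := hc.ne'
  field_simp
  have hcc : c ^ (n - 2*k) * c⁻¹ ^ (n - 2*k) = 1 := by rw [← mul_pow, mul_inv_cancel₀ hc0, one_pow]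
  linear_combination (c^(2*k) * z^(n-2*k) * (-1)^k * 2^(n-2*k)) * hcc


/-- Addition theorem for Hermite polynomials:
`((Σ a_k²)^(n/2)/n!) H_n((Σ a_k X_k)/√(Σ a_k²)) = Σ_{m₁+⋯+m_r=n} Π_k (a_k^(m_k)/m_k!) H_(m_k)(X_k)`. -/
theorem hermite_addition (n r : ℕ) (hr : 1 ≤ r) (a X : Fin r → ℝ)
    (ha : ∃ k, a k ≠ 0) :
    (∑ k, (a k) ^ 2) ^ ((n : ℝ) / 2) / (n.factorial : ℝ) *
        Hpoly n ((∑ k, a k * X k) / Real.sqrt (∑ k, (a k) ^ 2)) =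
      ∑ m ∈ Finset.Nat.antidiagonalTuple r n,
        ∏ k, (a k) ^ (m k) / ((m k).factorial : ℝ) * Hpoly (m k) (X k) := by
  obtain ⟨k0, hk0⟩ := ha
  have hS : 0 < ∑ k, (a k)^2 :=
    Finset.sum_pos' (fun i _ => sq_nonneg _) ⟨k0, Finset.mem_univ _, by positivity⟩
  rw [evalL n _ _ hS, show Eser (∑ k, a k * X k) (∑ k, (a k)^2)
      = ∏ k, Eser (a k * X k) ((a k)^2) from (Eser_prod Finset.univ _ _).symm,
    coeff_prod_tuple]
  refine Finset.sum_congr rfl fun m hm => Finset.prod_congr rfl fun k _ => ?_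
  exact evalR (m k) (a k) (X k)
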